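/- Let X and Z be independent centered Gaussian random variables with variances σ² > 0 and τ² > 0, respectively. Then P(−Z < X and X < 0) ≤ τ/(2πσ). -/

import Mathlib

open MeasureTheory ProbabilityTheory Real Set
open scoped NNReal ENNReal

lemma stmt7_aux_integral {τ : ℝ} (hτ : 0 < τ) :
    ∫ z in Ioi (0:ℝ), z * rexp (-z ^ 2 / (2 * τ ^ 2)) = τ ^ 2 := by
  have h2 : (0:ℝ) < 2 * τ ^ 2 := by positivity
  have := integral_Ioi_of_hasDerivAt_of_tendsto'
    (f := fun z : ℝ => -τ ^ 2 * rexp (-z ^ 2 / (2 * τ ^ 2)))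
    (f' := fun z : ℝ => z * rexp (-z ^ 2 / (2 * τ ^ 2))) (a := 0) (m := 0)
    ?_ ?_ ?_
  · rw [this]; simp
  · intro x _
    have h1 : HasDerivAt (fun z : ℝ => -z ^ 2 / (2 * τ ^ 2)) (-(2 * x) / (2 * τ ^ 2)) x := by
      have : HasDerivAt (fun z : ℝ => -z ^ 2) (-(2 * x)) x := by
        simpa using ((hasDerivAt_pow 2 x).fun_neg)
      exact this.div_const _
    have := (h1.exp).const_mul (-τ ^ 2)
    convert this using 1
    · rfl
    field_simp
  · have hb : (0:ℝ) < (2 * τ ^ 2)⁻¹ := by positivity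
    have := (integrableOn_rpow_mul_exp_neg_mul_sq hb (s := 1) (by norm_num))
    refine this.congr_fun (fun x hx => ?_) measurableSet_Ioi
    dsimp only
    rw [Real.rpow_one]
    ring_nf
  · rw [show (0:ℝ) = -τ ^ 2 * 0 by ring]
    refine Filter.Tendsto.const_mul _ ?_
    refine Real.tendsto_exp_atBot.comp ?_
    apply Filter.Tendsto.atBot_div_const h2
    have : Filter.Tendsto (fun z : ℝ => z ^ 2) Filter.atTop Filter.atTop :=
      Filter.tendsto_pow_atTop (by norm_num)
    exact Filter.tendsto_neg_atBot_iff.mpr this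

lemma stmt7_aux_lintegral {τ : ℝ} (hτ : 0 < τ) :
    ∫⁻ z, ENNReal.ofReal z ∂(gaussianReal 0 (Real.toNNReal (τ ^ 2))) =
      ENNReal.ofReal (τ / √(2 * π)) := by
  have hwne : Real.toNNReal (τ ^ 2) ≠ 0 := by
    simp only [ne_eq, Real.toNNReal_eq_zero, not_le]
    positivity
  have hw : ((Real.toNNReal (τ ^ 2) : ℝ≥0) : ℝ) = τ ^ 2 :=
    Real.coe_toNNReal _ (by positivity)
  rw [gaussianReal_of_var_ne_zero 0 hwne,
    lintegral_withDensity_eq_lintegral_mul _ (measurable_gaussianPDF _ _)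
      ENNReal.measurable_ofReal]
  have hsplit : ∀ z : ℝ, (gaussianPDF 0 (Real.toNNReal (τ ^ 2)) * fun z => ENNReal.ofReal z) z
      = (Ioi (0:ℝ)).indicator
        (fun z => ENNReal.ofReal (gaussianPDFReal 0 (Real.toNNReal (τ ^ 2)) z * z)) z := by
    intro z
    by_cases hz : 0 < z
    · simp only [indicator_of_mem (mem_Ioi.mpr hz), Pi.mul_apply, gaussianPDF]
      rw [ENNReal.ofReal_mul (gaussianPDFReal_nonneg _ _ _)]
    · simp only [indicator_of_notMem (by simpa using hz : z ∉ Ioi (0:ℝ)), Pi.mul_apply]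
      rw [ENNReal.ofReal_eq_zero.mpr (le_of_not_gt hz), mul_zero]
  rw [lintegral_congr hsplit, lintegral_indicator measurableSet_Ioi]
  have hsqrt : Real.sqrt (2 * π * ((Real.toNNReal (τ ^ 2) : ℝ≥0) : ℝ)) = τ * √(2 * π) := by
    rw [hw]
    rw [mul_comm (2 * π), Real.sqrt_mul (by positivity), Real.sqrt_sq hτ.le]
  have hfun : ∀ z ∈ Ioi (0:ℝ), gaussianPDFReal 0 (Real.toNNReal (τ ^ 2)) z * z
      = (τ * √(2 * π))⁻¹ * (z * rexp (-z ^ 2 / (2 * τ ^ 2))) := by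
    intro z _
    rw [gaussianPDFReal, hsqrt, hw]
    ring_nf
  have hint : IntegrableOn (fun z : ℝ =>
      gaussianPDFReal 0 (Real.toNNReal (τ ^ 2)) z * z) (Ioi 0) := by
    have hb : (0:ℝ) < (2 * τ ^ 2)⁻¹ := by positivity
    have h1 : IntegrableOn (fun x : ℝ =>
        (τ * √(2 * π))⁻¹ * (x ^ (1:ℝ) * rexp (-(2 * τ ^ 2)⁻¹ * x ^ 2))) (Ioi 0) :=
      (integrableOn_rpow_mul_exp_neg_mul_sq hb (s := 1) (by norm_num)).const_mul _
    refine h1.congr_fun (fun x hx => ?_) measurableSet_Ioi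
    dsimp only
    rw [Real.rpow_one, hfun x hx]
    ring_nf
  have hnn : 0 ≤ᵐ[volume.restrict (Ioi (0:ℝ))]
      fun z => gaussianPDFReal 0 (Real.toNNReal (τ ^ 2)) z * z :=
    (ae_restrict_iff' measurableSet_Ioi).mpr (ae_of_all _ fun z hz =>
      mul_nonneg (gaussianPDFReal_nonneg _ _ _) (le_of_lt hz))
  rw [← ofReal_integral_eq_lintegral_ofReal hint hnn]
  congr 1
  rw [setIntegral_congr_fun measurableSet_Ioi hfun, integral_const_mul,
    stmt7_aux_integral hτ]
  have h2π : (0:ℝ) < √(2 * π) := Real.sqrt_pos.mpr (by positivity)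
  have h2π' : √(2 * π) * √(2 * π) = 2 * π := Real.mul_self_sqrt (by positivity)
  field_simp

theorem stmt7 {Ω : Type*} [MeasurableSpace Ω] (P : Measure Ω) [IsProbabilityMeasure P]
    (X Z : Ω → ℝ) (hXmeas : Measurable X) (hZmeas : Measurable Z)
    (σ τ : ℝ) (hσ : 0 < σ) (hτ : 0 < τ)
    (hX : Measure.map X P = gaussianReal 0 (Real.toNNReal (σ ^ 2)))
    (hZ : Measure.map Z P = gaussianReal 0 (Real.toNNReal (τ ^ 2)))
    (hind : IndepFun X Z P) :
    (P {ω | -Z ω < X ω ∧ X ω < 0}).toReal ≤ τ / (2 * Real.pi * σ) := by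
  set μ := gaussianReal 0 (Real.toNNReal (σ ^ 2)) with hμ
  set ν := gaussianReal 0 (Real.toNNReal (τ ^ 2)) with hν
  have hvne : Real.toNNReal (σ ^ 2) ≠ 0 := by
    simp only [ne_eq, Real.toNNReal_eq_zero, not_le]; positivity
  have hv : ((Real.toNNReal (σ ^ 2) : ℝ≥0) : ℝ) = σ ^ 2 :=
    Real.coe_toNNReal _ (by positivity)
  have hmap : Measure.map (fun ω => (X ω, Z ω)) P = μ.prod ν := by
    have h := (indepFun_iff_map_prod_eq_prod_map_map hXmeas.aemeasurable
      hZmeas.aemeasurable).mp hind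
    rw [hX, hZ] at h
    exact h
  set T : Set (ℝ × ℝ) := {p | -p.2 < p.1 ∧ p.1 < 0} with hTdef
  have hT : MeasurableSet T :=
    (measurableSet_lt measurable_snd.neg measurable_fst).inter
      (measurableSet_lt measurable_fst measurable_const)
  have hPS : P {ω | -Z ω < X ω ∧ X ω < 0} = (μ.prod ν) T := by
    rw [← hmap, Measure.map_apply (hXmeas.prodMk hZmeas) hT]
    rfl
  have hprod : (μ.prod ν) T = ∫⁻ z, μ ((fun x => (x, z)) ⁻¹' T) ∂ν :=
    Measure.prod_apply_symm hT
  have hslice_set : ∀ z : ℝ, (fun x => (x, z)) ⁻¹' T = Ioo (-z) 0 := by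
    intro z; ext x; simp [hTdef, Set.mem_Ioo, and_comm]
  have h2π : (0:ℝ) < √(2 * π) := Real.sqrt_pos.mpr (by positivity)
  have hslice : ∀ z : ℝ, μ (Ioo (-z) 0) ≤
      ENNReal.ofReal ((σ * √(2 * π))⁻¹) * ENNReal.ofReal z := by
    intro z
    rw [hμ, gaussianReal_apply 0 hvne]
    have hsqrt : Real.sqrt (2 * π * ((Real.toNNReal (σ ^ 2) : ℝ≥0) : ℝ)) = σ * √(2 * π) := by
      rw [hv, mul_comm (2 * π), Real.sqrt_mul (by positivity), Real.sqrt_sq hσ.le]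
    calc ∫⁻ x in Ioo (-z) 0, gaussianPDF 0 (Real.toNNReal (σ ^ 2)) x
        ≤ ∫⁻ _ in Ioo (-z) 0, ENNReal.ofReal ((σ * √(2 * π))⁻¹) := by
          refine setLIntegral_mono measurable_const fun x _ => ?_
          rw [gaussianPDF, gaussianPDFReal, hsqrt]
          refine ENNReal.ofReal_le_ofReal ?_
          calc (σ * √(2 * π))⁻¹ * rexp (-(x - 0) ^ 2 / (2 * ((Real.toNNReal (σ ^ 2) : ℝ≥0) : ℝ)))
              ≤ (σ * √(2 * π))⁻¹ * 1 := by
                refine mul_le_mul_of_nonneg_left ?_ (by positivity)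
                rw [← Real.exp_zero]
                refine Real.exp_le_exp.mpr ?_
                rw [hv]
                apply div_nonpos_of_nonpos_of_nonneg
                · simp [sq_nonneg]
                · positivity
            _ = (σ * √(2 * π))⁻¹ := mul_one _
      _ = ENNReal.ofReal ((σ * √(2 * π))⁻¹) * volume (Ioo (-z) 0) := setLIntegral_const _ _
      _ = ENNReal.ofReal ((σ * √(2 * π))⁻¹) * ENNReal.ofReal z := by
          rw [Real.volume_Ioo]
          norm_num
  have hbound : (μ.prod ν) T ≤
      ENNReal.ofReal ((σ * √(2 * π))⁻¹) * ENNReal.ofReal (τ / √(2 * π)) := by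
    rw [hprod]
    calc ∫⁻ z, μ ((fun x => (x, z)) ⁻¹' T) ∂ν
        ≤ ∫⁻ z, ENNReal.ofReal ((σ * √(2 * π))⁻¹) * ENNReal.ofReal z ∂ν := by
          refine lintegral_mono fun z => ?_
          rw [hslice_set z]
          exact hslice z
      _ = ENNReal.ofReal ((σ * √(2 * π))⁻¹) * ∫⁻ z, ENNReal.ofReal z ∂ν :=
          lintegral_const_mul _ ENNReal.measurable_ofReal
      _ = ENNReal.ofReal ((σ * √(2 * π))⁻¹) * ENNReal.ofReal (τ / √(2 * π)) := by
          rw [hν, stmt7_aux_lintegral hτ]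
  rw [hPS]
  have hfin : ENNReal.ofReal ((σ * √(2 * π))⁻¹) * ENNReal.ofReal (τ / √(2 * π)) ≠ ⊤ :=
    ENNReal.mul_ne_top ENNReal.ofReal_ne_top ENNReal.ofReal_ne_top
  refine le_trans (ENNReal.toReal_mono hfin hbound) ?_
  rw [← ENNReal.ofReal_mul (by positivity), ENNReal.toReal_ofReal (by positivity)]
  have h2π' : √(2 * π) * √(2 * π) = 2 * π := Real.mul_self_sqrt (by positivity)
  have heq : (σ * √(2 * π))⁻¹ * (τ / √(2 * π)) = τ / (2 * π * σ) := by
    rw [← h2π']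
    field_simp
    rw [Real.sqrt_sq h2π.le]
  exact heq.le
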